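/- arXiv:2208.02719 — 2 statements merged into one kernel-verified Lean document; each statement's English description precedes it below -/
import Mathlib

section
/- Let s be an increasing function on (l,r). Define s_d^+(x) := μ_d^+((0,x)) for x ≥ 0 and −μ_d^+([x,0)) for x < 0, and s_d^-(x) := μ_d^-((0,x]) for x ≥ 0 and −μ_d^-((x,0)) for x < 0, where μ_d^± are the atomic measures of right and left jumps of s. Then s_c := s − s_d^+ − s_d^- is an increasing and continuous function on (l,r). -/
open Set Function Filter Topology

namespace Stmt3Aux

variable {l r : ℝ} {s : ℝ → ℝ}

lemma tendsto_right (hs : MonotoneOn s (Set.Ioo l r)) {x : ℝ} (hx : x ∈ Set.Ioo l r) :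
    Tendsto s (𝓝[>] x) (𝓝 (rightLim s x)) := by
  have hne : (Ioo x r).Nonempty := nonempty_Ioo.2 hx.2
  have hsub : Ioo x r ⊆ Ioo l r := fun y hy => ⟨hx.1.trans hy.1, hy.2⟩
  have hbdd : BddBelow (s '' Ioo x r) := by
    refine ⟨s x, ?_⟩
    rintro z ⟨y, hy, rfl⟩
    exact hs hx (hsub hy) hy.1.le
  have ht := MonotoneOn.tendsto_nhdsWithin_Ioo_right hne (hs.mono hsub) hbdd
  have heq : rightLim s x = sInf (s '' Ioo x r) :=
    rightLim_eq_of_tendsto ht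
  rwa [heq]

lemma tendsto_left (hs : MonotoneOn s (Set.Ioo l r)) {x : ℝ} (hx : x ∈ Set.Ioo l r) :
    Tendsto s (𝓝[<] x) (𝓝 (leftLim s x)) := by
  have hne : (Ioo l x).Nonempty := nonempty_Ioo.2 hx.1
  have hsub : Ioo l x ⊆ Ioo l r := fun y hy => ⟨hy.1, hy.2.trans hx.2⟩
  have hbdd : BddAbove (s '' Ioo l x) := by
    refine ⟨s x, ?_⟩
    rintro z ⟨y, hy, rfl⟩
    exact hs (hsub hy) hx hy.2.le
  have ht := MonotoneOn.tendsto_nhdsWithin_Ioo_left hne (hs.mono hsub) hbdd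
  have heq : leftLim s x = sSup (s '' Ioo l x) :=
    leftLim_eq_of_tendsto ht
  rwa [heq]

lemma self_le_rightLim (hs : MonotoneOn s (Set.Ioo l r)) {x : ℝ} (hx : x ∈ Set.Ioo l r) :
    s x ≤ rightLim s x := by
  refine ge_of_tendsto (tendsto_right hs hx) ?_
  filter_upwards [Ioo_mem_nhdsGT hx.2] with y hy
  exact hs hx ⟨hx.1.trans hy.1, hy.2⟩ hy.1.le

lemma rightLim_le (hs : MonotoneOn s (Set.Ioo l r)) {x z : ℝ} (hx : x ∈ Set.Ioo l r)
    (hz : z ∈ Set.Ioo x r) : rightLim s x ≤ s z := by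
  refine le_of_tendsto (tendsto_right hs hx) ?_
  filter_upwards [Ioo_mem_nhdsGT hz.1] with y hy
  exact hs ⟨hx.1.trans hy.1, hy.2.trans hz.2⟩ ⟨hx.1.trans hz.1, hz.2⟩ hy.2.le

lemma leftLim_le_self (hs : MonotoneOn s (Set.Ioo l r)) {x : ℝ} (hx : x ∈ Set.Ioo l r) :
    leftLim s x ≤ s x := by
  refine le_of_tendsto (tendsto_left hs hx) ?_
  filter_upwards [Ioo_mem_nhdsLT hx.1] with y hy
  exact hs ⟨hy.1, hy.2.trans hx.2⟩ hx hy.2.le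

lemma le_leftLim (hs : MonotoneOn s (Set.Ioo l r)) {x z : ℝ} (hx : x ∈ Set.Ioo l r)
    (hz : z ∈ Set.Ioo l x) : s z ≤ leftLim s x := by
  refine ge_of_tendsto (tendsto_left hs hx) ?_
  filter_upwards [Ioo_mem_nhdsLT hz.2] with y hy
  exact hs ⟨hz.1, hz.2.trans hx.2⟩ ⟨hz.1.trans hy.1, hy.2.trans hx.2⟩ hy.1.le

lemma rightLim_le_leftLim (hs : MonotoneOn s (Set.Ioo l r)) {x y : ℝ} (hx : x ∈ Set.Ioo l r)
    (hy : y ∈ Set.Ioo l r) (hxy : x < y) : rightLim s x ≤ leftLim s y := by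
  have hm1 : x < (x + y) / 2 := by linarith
  have hm2 : (x + y) / 2 < y := by linarith
  exact (rightLim_le hs hx ⟨hm1, hm2.trans hy.2⟩).trans
    (le_leftLim hs hy ⟨hx.1.trans hm1, hm2⟩)

lemma jp_nonneg (hs : MonotoneOn s (Set.Ioo l r)) {x : ℝ} (hx : x ∈ Set.Ioo l r) :
    0 ≤ rightLim s x - s x := sub_nonneg.2 (self_le_rightLim hs hx)

lemma jm_nonneg (hs : MonotoneOn s (Set.Ioo l r)) {x : ℝ} (hx : x ∈ Set.Ioo l r) :
    0 ≤ s x - leftLim s x := sub_nonneg.2 (leftLim_le_self hs hx)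

lemma finset_bound (hs : MonotoneOn s (Set.Ioo l r)) (F : Finset ℝ) {a : ℝ}
    (ha : a ∈ Set.Ioo l r) :
    ∀ b : ℝ, b ∈ Set.Ioo l r → a < b → ↑F ⊆ Set.Ioo a b →
    ∑ y ∈ F, ((rightLim s y - s y) + (s y - leftLim s y)) ≤ leftLim s b - rightLim s a := by
  classical
  induction F using Finset.induction_on_max with
  | empty =>
    intro b hb hab _
    simpa using sub_nonneg.2 (rightLim_le_leftLim hs ha hb hab)
  | insert y F hmax IH =>
    intro b hb hab hF
    have hyab : y ∈ Set.Ioo a b := hF (Finset.mem_coe.2 (Finset.mem_insert_self y F))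
    have hylr : y ∈ Set.Ioo l r := ⟨ha.1.trans hyab.1, hyab.2.trans hb.2⟩
    have hF' : ↑F ⊆ Set.Ioo a y := by
      intro z hz
      have hz' := Finset.mem_coe.1 hz
      exact ⟨(hF (Finset.mem_coe.2 (Finset.mem_insert_of_mem hz'))).1, hmax z hz'⟩
    have hIH := IH y hylr hyab.1 hF'
    have hynotF : y ∉ F := fun h => lt_irrefl y (hmax y h)
    rw [Finset.sum_insert hynotF]
    have h1 : rightLim s y ≤ leftLim s b := rightLim_le_leftLim hs hylr hb hyab.2
    linarith

lemma summable_aux (hs : MonotoneOn s (Set.Ioo l r)) {g : ℝ → ℝ}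
    (hg1 : ∀ y ∈ Set.Ioo l r, 0 ≤ g y)
    (hg2 : ∀ y ∈ Set.Ioo l r, g y ≤ (rightLim s y - s y) + (s y - leftLim s y))
    {S : Set ℝ} {a b : ℝ} (ha : a ∈ Set.Ioo l r) (hb : b ∈ Set.Ioo l r) (hab : a ≤ b)
    (hS : S ⊆ Set.Icc a b) : Summable (fun y : S => g ↑y) := by
  classical
  have ha'1 : l < (l + a) / 2 := by linarith [ha.1]
  have ha'2 : (l + a) / 2 < a := by linarith [ha.1]
  have hb'1 : b < (b + r) / 2 := by linarith [hb.2]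
  have hb'2 : (b + r) / 2 < r := by linarith [hb.2]
  have ha' : (l + a) / 2 ∈ Set.Ioo l r := ⟨ha'1, ha'2.trans ha.2⟩
  have hb' : (b + r) / 2 ∈ Set.Ioo l r := ⟨hb.1.trans hb'1, hb'2⟩
  have hab' : (l + a) / 2 < (b + r) / 2 := lt_trans (lt_of_lt_of_le ha'2 hab) hb'1
  have hsub : S ⊆ Set.Ioo ((l + a) / 2) ((b + r) / 2) := fun y hy =>
    ⟨lt_of_lt_of_le ha'2 (hS hy).1, lt_of_le_of_lt (hS hy).2 hb'1⟩
  have hsublr : S ⊆ Set.Ioo l r := fun y hy =>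
    ⟨lt_of_lt_of_le ha.1 (hS hy).1, lt_of_le_of_lt (hS hy).2 hb.2⟩
  refine summable_of_sum_le (c := leftLim s ((b + r) / 2) - rightLim s ((l + a) / 2)) ?_ ?_
  · intro y
    exact hg1 _ (hsublr y.2)
  · intro u
    have hinj : ∀ x ∈ u, ∀ y ∈ u, (Subtype.val x) = Subtype.val y → x = y :=
      fun x _ y _ h => Subtype.ext h
    have himg : ↑(u.image Subtype.val) ⊆ S := by
      intro i hi
      rcases Finset.mem_image.1 (Finset.mem_coe.1 hi) with ⟨x, -, rfl⟩
      exact x.2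
    calc ∑ y ∈ u, g ↑y = ∑ y ∈ u.image Subtype.val, g y := (Finset.sum_image hinj).symm
      _ ≤ ∑ y ∈ u.image Subtype.val, ((rightLim s y - s y) + (s y - leftLim s y)) :=
          Finset.sum_le_sum fun i hi => hg2 i (hsublr (himg (Finset.mem_coe.2 hi)))
      _ ≤ leftLim s ((b + r) / 2) - rightLim s ((l + a) / 2) :=
          finset_bound hs _ ha' _ hb' hab' (Set.Subset.trans himg hsub)

lemma summable_jp (hs : MonotoneOn s (Set.Ioo l r)) {S : Set ℝ} {a b : ℝ}
    (ha : a ∈ Set.Ioo l r) (hb : b ∈ Set.Ioo l r) (hab : a ≤ b) (hS : S ⊆ Set.Icc a b) :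
    Summable (fun y : S => rightLim s ↑y - s ↑y) := by
  refine summable_aux hs (fun y hy => jp_nonneg hs hy) (fun y hy => ?_) ha hb hab hS
  linarith [jm_nonneg hs hy]

lemma summable_jm (hs : MonotoneOn s (Set.Ioo l r)) {S : Set ℝ} {a b : ℝ}
    (ha : a ∈ Set.Ioo l r) (hb : b ∈ Set.Ioo l r) (hab : a ≤ b) (hS : S ⊆ Set.Icc a b) :
    Summable (fun y : S => s ↑y - leftLim s ↑y) := by
  refine summable_aux hs (fun y hy => jm_nonneg hs hy) (fun y hy => ?_) ha hb hab hS
  linarith [jp_nonneg hs hy]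

lemma tsum_split (f : ℝ → ℝ) {S T U : Set ℝ} (hU : U = S ∪ T) (hd : Disjoint S T)
    (hS : Summable (fun y : S => f ↑y)) (hT : Summable (fun y : T => f ↑y)) :
    ∑' y : U, f ↑y = (∑' y : S, f ↑y) + ∑' y : T, f ↑y := by
  subst hU
  exact Summable.tsum_union_disjoint hd hS hT

lemma tsum_split_singleton (f : ℝ → ℝ) {c : ℝ} {T U : Set ℝ} (hU : U = {c} ∪ T)
    (hd : c ∉ T) (hc : Summable (fun y : ({c} : Set ℝ) => f ↑y))
    (hT : Summable (fun y : T => f ↑y)) :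
    ∑' y : U, f ↑y = f c + ∑' y : T, f ↑y := by
  subst hU
  rw [Summable.tsum_union_disjoint (f := f) (Set.disjoint_singleton_left.2 hd) hc hT,
    tsum_singleton c f]

lemma tsum_empty_set (f : ℝ → ℝ) {U : Set ℝ} (hU : U = ∅) : ∑' y : U, f ↑y = 0 := by
  subst hU
  exact tsum_empty

lemma tsum_J_bound (hs : MonotoneOn s (Set.Ioo l r)) {a b : ℝ}
    (ha : a ∈ Set.Ioo l r) (hb : b ∈ Set.Ioo l r) (hab : a < b) :
    ∑' y : Set.Ioo a b, ((rightLim s ↑y - s ↑y) + (s ↑y - leftLim s ↑y))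
      ≤ leftLim s b - rightLim s a := by
  classical
  have hsummable : Summable (fun y : Set.Ioo a b =>
      (rightLim s ↑y - s ↑y) + (s ↑y - leftLim s ↑y)) :=
    summable_aux hs (fun y hy => by linarith [jp_nonneg hs hy, jm_nonneg hs hy])
      (fun y _ => le_refl _) ha hb hab.le Set.Ioo_subset_Icc_self
  refine Summable.tsum_le_of_sum_le hsummable fun u => ?_
  have hinj : ∀ x ∈ u, ∀ y ∈ u, (Subtype.val x) = Subtype.val y → x = y :=
    fun x _ y _ h => Subtype.ext h
  have himg : ↑(u.image Subtype.val) ⊆ Set.Ioo a b := by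
    intro i hi
    rcases Finset.mem_image.1 (Finset.mem_coe.1 hi) with ⟨x, -, rfl⟩
    exact x.2
  calc ∑ y ∈ u, ((rightLim s ↑y - s ↑y) + (s ↑y - leftLim s ↑y))
      = ∑ y ∈ u.image Subtype.val, ((rightLim s y - s y) + (s y - leftLim s y)) :=
        (Finset.sum_image
          (f := fun z => (rightLim s z - s z) + (s z - leftLim s z)) hinj).symm
    _ ≤ leftLim s b - rightLim s a := finset_bound hs _ ha _ hb hab himg

/-- The key inequality: the sum of jumps over an interval is at most the increment of `s`. -/
lemma tsum_bound (hs : MonotoneOn s (Set.Ioo l r)) {a b : ℝ}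
    (ha : a ∈ Set.Ioo l r) (hb : b ∈ Set.Ioo l r) (hab : a ≤ b) :
    (∑' y : Set.Ico a b, (rightLim s ↑y - s ↑y))
      + (∑' y : Set.Ioc a b, (s ↑y - leftLim s ↑y)) ≤ s b - s a := by
  rcases eq_or_lt_of_le hab with rfl | hab'
  · simp [Set.Ico_self, Set.Ioc_self]
  · have hIco : Set.Ico a b = {a} ∪ Set.Ioo a b := by
      rw [← Set.Ioo_insert_left hab', Set.insert_eq]
    have hIoc : Set.Ioc a b = {b} ∪ Set.Ioo a b := by
      rw [← Set.Ioo_insert_right hab', Set.insert_eq]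
    have hsing_a : Summable (fun y : ({a} : Set ℝ) => rightLim s ↑y - s ↑y) :=
      summable_jp hs ha hb hab (by simp [Set.singleton_subset_iff, hab])
    have hsing_b : Summable (fun y : ({b} : Set ℝ) => s ↑y - leftLim s ↑y) :=
      summable_jm hs ha hb hab (by simp [Set.singleton_subset_iff, hab])
    have hoo_p : Summable (fun y : Set.Ioo a b => rightLim s ↑y - s ↑y) :=
      summable_jp hs ha hb hab Set.Ioo_subset_Icc_self
    have hoo_m : Summable (fun y : Set.Ioo a b => s ↑y - leftLim s ↑y) :=
      summable_jm hs ha hb hab Set.Ioo_subset_Icc_self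
    have h1 : (∑' y : Set.Ico a b, (rightLim s ↑y - s ↑y))
        = (rightLim s a - s a) + ∑' y : Set.Ioo a b, (rightLim s ↑y - s ↑y) :=
      tsum_split_singleton (fun z => rightLim s z - s z) hIco
        (fun h => lt_irrefl a h.1) hsing_a hoo_p
    have h2 : (∑' y : Set.Ioc a b, (s ↑y - leftLim s ↑y))
        = (s b - leftLim s b) + ∑' y : Set.Ioo a b, (s ↑y - leftLim s ↑y) :=
      tsum_split_singleton (fun z => s z - leftLim s z) hIoc
        (fun h => lt_irrefl b h.2) hsing_b hoo_m
    have h3 : (∑' y : Set.Ioo a b, ((rightLim s ↑y - s ↑y) + (s ↑y - leftLim s ↑y)))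
        = (∑' y : Set.Ioo a b, (rightLim s ↑y - s ↑y))
          + ∑' y : Set.Ioo a b, (s ↑y - leftLim s ↑y) :=
      Summable.tsum_add hoo_p hoo_m
    have h4 := tsum_J_bound hs ha hb hab'
    linarith

end Stmt3Aux

open Stmt3Aux in
/-- For an increasing function `s` on `(l,r)` with `s(0-) = s(0) = s(0+) = 0`, subtracting the
accumulated right jumps `s_d^+` and left jumps `s_d^-` yields a function
`s_c = s - s_d^+ - s_d^-` that is increasing and continuous on `(l,r)`. -/
theorem stmt3 (l r : ℝ) (hl : l < 0) (hr : 0 < r) (s : ℝ → ℝ)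
    (hs : MonotoneOn s (Set.Ioo l r))
    (h0m : Function.leftLim s 0 = 0) (h00 : s 0 = 0) (h0p : Function.rightLim s 0 = 0)
    (sdp sdm : ℝ → ℝ)
    (hsdp1 : ∀ x : ℝ, 0 ≤ x →
      sdp x = ∑' y : Set.Ioo (0:ℝ) x, (Function.rightLim s y - s y))
    (hsdp2 : ∀ x : ℝ, x < 0 →
      sdp x = -∑' y : Set.Ico x (0:ℝ), (Function.rightLim s y - s y))
    (hsdm1 : ∀ x : ℝ, 0 ≤ x →
      sdm x = ∑' y : Set.Ioc (0:ℝ) x, (s y - Function.leftLim s y))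
    (hsdm2 : ∀ x : ℝ, x < 0 →
      sdm x = -∑' y : Set.Ioo x (0:ℝ), (s y - Function.leftLim s y)) :
    MonotoneOn (fun x => s x - sdp x - sdm x) (Set.Ioo l r) ∧
    ContinuousOn (fun x => s x - sdp x - sdm x) (Set.Ioo l r) := by
  have h0lr : (0:ℝ) ∈ Set.Ioo l r := ⟨hl, hr⟩
  -- difference formula for sdp
  have hdp : ∀ a b : ℝ, a ∈ Set.Ioo l r → b ∈ Set.Ioo l r → a ≤ b →
      sdp b - sdp a = ∑' y : Set.Ico a b, (rightLim s ↑y - s ↑y) := by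
    intro a b ha hb hab
    rcases le_or_gt 0 a with h0a | h0a
    · -- 0 ≤ a ≤ b
      have h0b : (0:ℝ) ≤ b := h0a.trans hab
      rw [hsdp1 a h0a, hsdp1 b h0b]
      rcases eq_or_lt_of_le h0a with rfl | h0a'
      · -- a = 0
        rcases eq_or_lt_of_le hab with rfl | h0b'
        · have e0 : (∑' y : Set.Ico (0:ℝ) (0:ℝ), (rightLim s ↑y - s ↑y)) = 0 :=
            tsum_empty_set (fun z => rightLim s z - s z) (Set.Ico_self 0)
          rw [e0]
          ring
        · have hIco : Set.Ico (0:ℝ) b = {0} ∪ Set.Ioo 0 b := by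
            rw [← Set.Ioo_insert_left h0b', Set.insert_eq]
          have hsing : Summable (fun y : ({(0:ℝ)} : Set ℝ) => rightLim s ↑y - s ↑y) :=
            summable_jp hs h0lr hb h0b (by simp [Set.singleton_subset_iff, h0b])
          have hoo : Summable (fun y : Set.Ioo (0:ℝ) b => rightLim s ↑y - s ↑y) :=
            summable_jp hs h0lr hb h0b Set.Ioo_subset_Icc_self
          have e1 : (∑' y : Set.Ico (0:ℝ) b, (rightLim s ↑y - s ↑y))
              = (rightLim s 0 - s 0) + ∑' y : Set.Ioo (0:ℝ) b, (rightLim s ↑y - s ↑y) :=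
            tsum_split_singleton (fun z => rightLim s z - s z) hIco
              (fun h => lt_irrefl 0 h.1) hsing hoo
          have e0 : (∑' y : Set.Ioo (0:ℝ) (0:ℝ), (rightLim s ↑y - s ↑y)) = 0 :=
            tsum_empty_set (fun z => rightLim s z - s z) (Set.Ioo_self 0)
          rw [e0, e1, h0p, h00]
          ring
      · -- 0 < a
        have hIoo : Set.Ioo (0:ℝ) b = Set.Ioo 0 a ∪ Set.Ico a b :=
          (Set.Ioo_union_Ico_eq_Ioo h0a' hab).symm
        have hdisj : Disjoint (Set.Ioo (0:ℝ) a) (Set.Ico a b) :=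
          Set.disjoint_left.2 (fun y hy1 hy2 => absurd hy2.1 (not_le.2 hy1.2))
        have h1 : Summable (fun y : Set.Ioo (0:ℝ) a => rightLim s ↑y - s ↑y) :=
          summable_jp hs h0lr hb h0b
            (Set.Ioo_subset_Icc_self.trans (Set.Icc_subset_Icc_right hab))
        have h2 : Summable (fun y : Set.Ico a b => rightLim s ↑y - s ↑y) :=
          summable_jp hs h0lr hb h0b
            (Set.Ico_subset_Icc_self.trans (Set.Icc_subset_Icc_left h0a))
        have e : (∑' y : Set.Ioo (0:ℝ) b, (rightLim s ↑y - s ↑y))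
            = (∑' y : Set.Ioo (0:ℝ) a, (rightLim s ↑y - s ↑y))
              + ∑' y : Set.Ico a b, (rightLim s ↑y - s ↑y) :=
          tsum_split (fun z => rightLim s z - s z) hIoo hdisj h1 h2
        rw [e]
        ring
    · rcases le_or_gt 0 b with h0b | hb0
      · -- a < 0 ≤ b
        rw [hsdp2 a h0a, hsdp1 b h0b]
        have hIco : Set.Ico a b = Set.Ico a 0 ∪ Set.Ico 0 b :=
          (Set.Ico_union_Ico_eq_Ico h0a.le h0b).symm
        have hdisj : Disjoint (Set.Ico a (0:ℝ)) (Set.Ico (0:ℝ) b) :=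
          Set.disjoint_left.2 (fun y hy1 hy2 => absurd hy2.1 (not_le.2 hy1.2))
        have h1 : Summable (fun y : Set.Ico a (0:ℝ) => rightLim s ↑y - s ↑y) :=
          summable_jp hs ha hb hab
            (Set.Ico_subset_Icc_self.trans (Set.Icc_subset_Icc_right h0b))
        have h2 : Summable (fun y : Set.Ico (0:ℝ) b => rightLim s ↑y - s ↑y) :=
          summable_jp hs ha hb hab
            (Set.Ico_subset_Icc_self.trans (Set.Icc_subset_Icc_left h0a.le))
        have e : (∑' y : Set.Ico a b, (rightLim s ↑y - s ↑y))
            = (∑' y : Set.Ico a (0:ℝ), (rightLim s ↑y - s ↑y))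
              + ∑' y : Set.Ico (0:ℝ) b, (rightLim s ↑y - s ↑y) :=
          tsum_split (fun z => rightLim s z - s z) hIco hdisj h1 h2
        rcases eq_or_lt_of_le h0b with rfl | h0b'
        · have e0 : (∑' y : Set.Ioo (0:ℝ) (0:ℝ), (rightLim s ↑y - s ↑y)) = 0 :=
            tsum_empty_set (fun z => rightLim s z - s z) (Set.Ioo_self 0)
          have e1 : (∑' y : Set.Ico (0:ℝ) (0:ℝ), (rightLim s ↑y - s ↑y)) = 0 :=
            tsum_empty_set (fun z => rightLim s z - s z) (Set.Ico_self 0)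
          rw [e, e0, e1]
          ring
        · have hIco2 : Set.Ico (0:ℝ) b = {0} ∪ Set.Ioo 0 b := by
            rw [← Set.Ioo_insert_left h0b', Set.insert_eq]
          have hsing : Summable (fun y : ({(0:ℝ)} : Set ℝ) => rightLim s ↑y - s ↑y) :=
            summable_jp hs h0lr hb h0b (by simp [Set.singleton_subset_iff, h0b])
          have hoo : Summable (fun y : Set.Ioo (0:ℝ) b => rightLim s ↑y - s ↑y) :=
            summable_jp hs h0lr hb h0b Set.Ioo_subset_Icc_self
          have e2 : (∑' y : Set.Ico (0:ℝ) b, (rightLim s ↑y - s ↑y))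
              = (rightLim s 0 - s 0) + ∑' y : Set.Ioo (0:ℝ) b, (rightLim s ↑y - s ↑y) :=
            tsum_split_singleton (fun z => rightLim s z - s z) hIco2
              (fun h => lt_irrefl 0 h.1) hsing hoo
          rw [e, e2, h0p, h00]
          ring
      · -- a ≤ b < 0
        have ha0 : a < 0 := lt_of_le_of_lt hab hb0
        rw [hsdp2 a ha0, hsdp2 b hb0]
        have hIco : Set.Ico a (0:ℝ) = Set.Ico a b ∪ Set.Ico b 0 :=
          (Set.Ico_union_Ico_eq_Ico hab hb0.le).symm
        have hdisj : Disjoint (Set.Ico a b) (Set.Ico b (0:ℝ)) :=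
          Set.disjoint_left.2 (fun y hy1 hy2 => absurd hy2.1 (not_le.2 hy1.2))
        have h1 : Summable (fun y : Set.Ico a b => rightLim s ↑y - s ↑y) :=
          summable_jp hs ha h0lr ha0.le
            (Set.Ico_subset_Icc_self.trans (Set.Icc_subset_Icc_right hb0.le))
        have h2 : Summable (fun y : Set.Ico b (0:ℝ) => rightLim s ↑y - s ↑y) :=
          summable_jp hs ha h0lr ha0.le
            (Set.Ico_subset_Icc_self.trans (Set.Icc_subset_Icc_left hab))
        have e : (∑' y : Set.Ico a (0:ℝ), (rightLim s ↑y - s ↑y))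
            = (∑' y : Set.Ico a b, (rightLim s ↑y - s ↑y))
              + ∑' y : Set.Ico b (0:ℝ), (rightLim s ↑y - s ↑y) :=
          tsum_split (fun z => rightLim s z - s z) hIco hdisj h1 h2
        rw [e]
        ring
  -- difference formula for sdm
  have hdm : ∀ a b : ℝ, a ∈ Set.Ioo l r → b ∈ Set.Ioo l r → a ≤ b →
      sdm b - sdm a = ∑' y : Set.Ioc a b, (s ↑y - leftLim s ↑y) := by
    intro a b ha hb hab
    rcases le_or_gt 0 a with h0a | h0a
    · -- 0 ≤ a ≤ b
      have h0b : (0:ℝ) ≤ b := h0a.trans hab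
      rw [hsdm1 a h0a, hsdm1 b h0b]
      have hIoc : Set.Ioc (0:ℝ) b = Set.Ioc 0 a ∪ Set.Ioc a b :=
        (Set.Ioc_union_Ioc_eq_Ioc h0a hab).symm
      have hdisj : Disjoint (Set.Ioc (0:ℝ) a) (Set.Ioc a b) :=
        Set.disjoint_left.2 (fun y hy1 hy2 => absurd hy1.2 (not_le.2 hy2.1))
      have h1 : Summable (fun y : Set.Ioc (0:ℝ) a => s ↑y - leftLim s ↑y) :=
        summable_jm hs h0lr hb h0b
          (Set.Ioc_subset_Icc_self.trans (Set.Icc_subset_Icc_right hab))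
      have h2 : Summable (fun y : Set.Ioc a b => s ↑y - leftLim s ↑y) :=
        summable_jm hs h0lr hb h0b
          (Set.Ioc_subset_Icc_self.trans (Set.Icc_subset_Icc_left h0a))
      have e : (∑' y : Set.Ioc (0:ℝ) b, (s ↑y - leftLim s ↑y))
          = (∑' y : Set.Ioc (0:ℝ) a, (s ↑y - leftLim s ↑y))
            + ∑' y : Set.Ioc a b, (s ↑y - leftLim s ↑y) :=
        tsum_split (fun z => s z - leftLim s z) hIoc hdisj h1 h2
      rw [e]
      ring
    · rcases le_or_gt 0 b with h0b | hb0
      · -- a < 0 ≤ b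
        rw [hsdm2 a h0a, hsdm1 b h0b]
        have hIoc : Set.Ioc a b = Set.Ioc a 0 ∪ Set.Ioc 0 b :=
          (Set.Ioc_union_Ioc_eq_Ioc h0a.le h0b).symm
        have hIoc0 : Set.Ioc a (0:ℝ) = {0} ∪ Set.Ioo a 0 := by
          rw [← Set.Ioo_insert_right h0a, Set.insert_eq]
        have hdisj1 : Disjoint (Set.Ioc a (0:ℝ)) (Set.Ioc (0:ℝ) b) :=
          Set.disjoint_left.2 (fun y hy1 hy2 => absurd hy1.2 (not_le.2 hy2.1))
        have hm1 : Summable (fun y : Set.Ioc a (0:ℝ) => s ↑y - leftLim s ↑y) :=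
          summable_jm hs ha hb hab
            (Set.Ioc_subset_Icc_self.trans (Set.Icc_subset_Icc_right h0b))
        have hm2 : Summable (fun y : Set.Ioc (0:ℝ) b => s ↑y - leftLim s ↑y) :=
          summable_jm hs ha hb hab
            (Set.Ioc_subset_Icc_self.trans (Set.Icc_subset_Icc_left h0a.le))
        have hsing : Summable (fun y : ({(0:ℝ)} : Set ℝ) => s ↑y - leftLim s ↑y) :=
          summable_jm hs ha hb hab (by simp [Set.singleton_subset_iff, h0a.le, h0b])
        have hm3 : Summable (fun y : Set.Ioo a (0:ℝ) => s ↑y - leftLim s ↑y) :=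
          summable_jm hs ha hb hab
            (Set.Ioo_subset_Icc_self.trans (Set.Icc_subset_Icc_right h0b))
        have e1 : (∑' y : Set.Ioc a b, (s ↑y - leftLim s ↑y))
            = (∑' y : Set.Ioc a (0:ℝ), (s ↑y - leftLim s ↑y))
              + ∑' y : Set.Ioc (0:ℝ) b, (s ↑y - leftLim s ↑y) :=
          tsum_split (fun z => s z - leftLim s z) hIoc hdisj1 hm1 hm2
        have e2 : (∑' y : Set.Ioc a (0:ℝ), (s ↑y - leftLim s ↑y))
            = (s 0 - leftLim s 0) + ∑' y : Set.Ioo a (0:ℝ), (s ↑y - leftLim s ↑y) :=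
          tsum_split_singleton (fun z => s z - leftLim s z) hIoc0
            (fun h => lt_irrefl 0 h.2) hsing hm3
        rw [e1, e2, h00, h0m]
        ring
      · -- a ≤ b < 0
        have ha0 : a < 0 := lt_of_le_of_lt hab hb0
        rw [hsdm2 a ha0, hsdm2 b hb0]
        have hIoo : Set.Ioo a (0:ℝ) = Set.Ioc a b ∪ Set.Ioo b 0 :=
          (Set.Ioc_union_Ioo_eq_Ioo hab hb0).symm
        have hdisj : Disjoint (Set.Ioc a b) (Set.Ioo b (0:ℝ)) :=
          Set.disjoint_left.2 (fun y hy1 hy2 => absurd hy1.2 (not_le.2 hy2.1))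
        have h1 : Summable (fun y : Set.Ioc a b => s ↑y - leftLim s ↑y) :=
          summable_jm hs ha h0lr ha0.le
            (Set.Ioc_subset_Icc_self.trans (Set.Icc_subset_Icc_right hb0.le))
        have h2 : Summable (fun y : Set.Ioo b (0:ℝ) => s ↑y - leftLim s ↑y) :=
          summable_jm hs ha h0lr ha0.le
            (Set.Ioo_subset_Icc_self.trans (Set.Icc_subset_Icc_left hab))
        have e : (∑' y : Set.Ioo a (0:ℝ), (s ↑y - leftLim s ↑y))
            = (∑' y : Set.Ioc a b, (s ↑y - leftLim s ↑y))
              + ∑' y : Set.Ioo b (0:ℝ), (s ↑y - leftLim s ↑y) :=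
          tsum_split (fun z => s z - leftLim s z) hIoo hdisj h1 h2
        rw [e]
        ring
  -- monotonicity
  have hmono : MonotoneOn (fun x => s x - sdp x - sdm x) (Set.Ioo l r) := by
    intro a ha b hb hab
    have h1 := hdp a b ha hb hab
    have h2 := hdm a b ha hb hab
    have h3 := tsum_bound hs ha hb hab
    show s a - sdp a - sdm a ≤ s b - sdp b - sdm b
    linarith
  refine ⟨hmono, ?_⟩
  -- continuity
  intro x hx
  have hub_r : ∀ b ∈ Set.Ioo x r,
      s b - sdp b - sdm b ≤ (s b - rightLim s x) + (s x - sdp x - sdm x) := by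
    intro b hb
    have hblr : b ∈ Set.Ioo l r := ⟨hx.1.trans hb.1, hb.2⟩
    have h1 := hdp x b hx hblr hb.1.le
    have h2 := hdm x b hx hblr hb.1.le
    have hsummable : Summable (fun y : Set.Ico x b => rightLim s ↑y - s ↑y) :=
      summable_jp hs hx hblr hb.1.le Set.Ico_subset_Icc_self
    have hge : rightLim s x - s x ≤ ∑' y : Set.Ico x b, (rightLim s ↑y - s ↑y) := by
      have := Summable.le_tsum hsummable ⟨x, ⟨le_refl x, hb.1⟩⟩
        (fun j _ => jp_nonneg hs ⟨hx.1.trans_le j.2.1, j.2.2.trans hb.2⟩)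
      simpa using this
    have hge2 : 0 ≤ ∑' y : Set.Ioc x b, (s ↑y - leftLim s ↑y) :=
      tsum_nonneg (fun j => jm_nonneg hs ⟨hx.1.trans j.2.1, lt_of_le_of_lt j.2.2 hb.2⟩)
    linarith
  have hlow_l : ∀ a ∈ Set.Ioo l x,
      (s a - leftLim s x) + (s x - sdp x - sdm x) ≤ s a - sdp a - sdm a := by
    intro a ha'
    have halr : a ∈ Set.Ioo l r := ⟨ha'.1, ha'.2.trans hx.2⟩
    have h1 := hdp a x halr hx ha'.2.le
    have h2 := hdm a x halr hx ha'.2.le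
    have hsummable : Summable (fun y : Set.Ioc a x => s ↑y - leftLim s ↑y) :=
      summable_jm hs halr hx ha'.2.le Set.Ioc_subset_Icc_self
    have hge : s x - leftLim s x ≤ ∑' y : Set.Ioc a x, (s ↑y - leftLim s ↑y) := by
      have := Summable.le_tsum hsummable ⟨x, ⟨ha'.2, le_refl x⟩⟩
        (fun j _ => jm_nonneg hs ⟨ha'.1.trans j.2.1, lt_of_le_of_lt j.2.2 hx.2⟩)
      simpa using this
    have hge2 : 0 ≤ ∑' y : Set.Ico a x, (rightLim s ↑y - s ↑y) :=
      tsum_nonneg (fun j => jp_nonneg hs ⟨lt_of_lt_of_le ha'.1 j.2.1, j.2.2.trans hx.2⟩)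
    linarith
  have htr : Tendsto (fun z => s z - sdp z - sdm z) (𝓝[>] x)
      (𝓝 (s x - sdp x - sdm x)) := by
    have hh : Tendsto (fun b => (s b - rightLim s x) + (s x - sdp x - sdm x)) (𝓝[>] x)
        (𝓝 (rightLim s x - rightLim s x + (s x - sdp x - sdm x))) :=
      ((tendsto_right hs hx).sub_const _).add_const _
    rw [sub_self, zero_add] at hh
    refine tendsto_of_tendsto_of_tendsto_of_le_of_le' tendsto_const_nhds hh ?_ ?_
    · filter_upwards [Ioo_mem_nhdsGT hx.2] with b hb using
        hmono hx ⟨hx.1.trans hb.1, hb.2⟩ hb.1.le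
    · filter_upwards [Ioo_mem_nhdsGT hx.2] with b hb using hub_r b hb
  have htl : Tendsto (fun z => s z - sdp z - sdm z) (𝓝[<] x)
      (𝓝 (s x - sdp x - sdm x)) := by
    have hh : Tendsto (fun a => (s a - leftLim s x) + (s x - sdp x - sdm x)) (𝓝[<] x)
        (𝓝 (leftLim s x - leftLim s x + (s x - sdp x - sdm x))) :=
      ((tendsto_left hs hx).sub_const _).add_const _
    rw [sub_self, zero_add] at hh
    refine tendsto_of_tendsto_of_tendsto_of_le_of_le' hh tendsto_const_nhds ?_ ?_
    · filter_upwards [Ioo_mem_nhdsLT hx.1] with a ha' using hlow_l a ha'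
    · filter_upwards [Ioo_mem_nhdsLT hx.1] with a ha' using
        hmono ⟨ha'.1, ha'.2.trans hx.2⟩ hx ha'.2.le
  have hnhds : 𝓝 x = 𝓝[Set.Iio x] x ⊔ (𝓝[{x}] x ⊔ 𝓝[Set.Ioi x] x) := by
    rw [← nhdsWithin_union, ← nhdsWithin_union]
    have huniv : (Set.Iio x ∪ ({x} ∪ Set.Ioi x) : Set ℝ) = Set.univ := by
      apply Set.eq_univ_iff_forall.2
      intro y
      rcases lt_trichotomy y x with h | h | h <;> simp [h]
    rw [huniv, nhdsWithin_univ]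
  have hca : ContinuousAt (fun z => s z - sdp z - sdm z) x := by
    rw [ContinuousAt, hnhds, Filter.tendsto_sup, Filter.tendsto_sup, nhdsWithin_singleton]
    exact ⟨htl, tendsto_pure_nhds _ _, htr⟩
  exact hca.continuousWithinAt
end

section
/- Let X be a Hunt process on a nearly closed subset E of the extended reals with the skip-free property: for all t < ζ, the open interval between X_{t-} and X_t contains no point of E, almost surely. Then: given states x, y, z ∈ E with x < y < z, times u < s, if X_u = x and X_s = z, then almost surely there exists t ∈ (u, s] such that X_t = y or X_{t-} = y. -/
open MeasureTheory Filter Topology Set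

/-- A (simplified) skip-free Hunt process on a nearly closed subset `E` of the extended
reals: a family of probability laws `P x` for `x ∈ E`, a càdlàg path process `X` with left
limit process `Xm` and lifetime `ζ`, satisfying the skip-free property (SF), the regularity
property (SR) and the no-killing-inside property (SK). -/
structure SkipFreeHuntProcess where
  /-- the state space, a nearly closed subset of the extended reals -/
  E : Set EReal
  nearlyClosed : IsClosed (E ∪ {sInf E, sSup E})
  /-- sample space -/
  Ω : Type
  mΩ : MeasurableSpace Ω
  /-- the law of the process started from `x` -/
  P : EReal → Measure Ω
  prob : ∀ x ∈ E, IsProbabilityMeasure (P x)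
  /-- sample paths -/
  X : ℝ → Ω → EReal
  /-- left-limit process `t ↦ X_{t-}` -/
  Xm : ℝ → Ω → EReal
  /-- lifetime -/
  ζ : Ω → ENNReal
  start : ∀ x ∈ E, ∀ᵐ ω ∂ P x, X 0 ω = x
  rightCont : ∀ ω : Ω, ∀ t : ℝ, 0 ≤ t →
    Tendsto (fun s => X s ω) (𝓝[>] t) (𝓝 (X t ω))
  leftLimit : ∀ ω : Ω, ∀ t : ℝ, 0 < t →
    Tendsto (fun s => X s ω) (𝓝[<] t) (𝓝 (Xm t ω))
  stateIn : ∀ x ∈ E, ∀ᵐ ω ∂ P x, ∀ t : ℝ, 0 ≤ t → ENNReal.ofReal t < ζ ω → X t ω ∈ E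
  /-- (SF) skip-free property -/
  skipFree : ∀ x ∈ E, ∀ᵐ ω ∂ P x, ∀ t : ℝ, 0 ≤ t → ENNReal.ofReal t < ζ ω →
    Set.Ioo (min (Xm t ω) (X t ω)) (max (Xm t ω) (X t ω)) ∩ E = ∅
  /-- (SR) regularity -/
  regular : ∀ x ∈ E, ∀ y ∈ E, 0 < P x {ω | ∃ t : ℝ, 0 < t ∧ X t ω = y}
  /-- (SK) no killing inside -/
  noKilling : ∀ x ∈ E, 0 < P x {ω | ζ ω < ⊤} →
    (sInf E ∉ E ∨ sSup E ∉ E) ∧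
    P x {ω | ζ ω < ⊤ ∧ Xm (ζ ω).toReal ω ∉ E} = P x {ω | ζ ω < ⊤}

/-- the hitting time `T_y = inf{t > 0 : X_t = y}` (with `inf ∅ = ∞`). -/
noncomputable def SkipFreeHuntProcess.hitTime (H : SkipFreeHuntProcess) (y : EReal)
    (ω : H.Ω) : ENNReal :=
  sInf (ENNReal.ofReal '' {t : ℝ | 0 < t ∧ H.X t ω = y})


/-- the entrance time `T_{≤y} = inf{t > 0 : X_t ≤ y}` of `(-∞,y]`. -/
noncomputable def SkipFreeHuntProcess.hitTimeLe (H : SkipFreeHuntProcess) (y : EReal)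
    (ω : H.Ω) : ENNReal :=
  sInf (ENNReal.ofReal '' {t : ℝ | 0 < t ∧ H.X t ω ≤ y})

/-- the exit time `T_{≠x} = inf{t > 0 : X_t ≠ x}`. -/
noncomputable def SkipFreeHuntProcess.hitTimeNe (H : SkipFreeHuntProcess) (x : EReal)
    (ω : H.Ω) : ENNReal :=
  sInf (ENNReal.ofReal '' {t : ℝ | 0 < t ∧ H.X t ω ≠ x})

/-- Skip-free consequence: if `x < y < z` in `E` and the process is at `x` at time `u` and at
`z` at a later time `s` (before the lifetime), then almost surely there is a time
`t ∈ (u,s]` at which `X_t = y` or `X_{t-} = y`. -/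
theorem stmt7 (H : SkipFreeHuntProcess) (x y z : EReal)
    (hx : x ∈ H.E) (hy : y ∈ H.E) (hz : z ∈ H.E) (hxy : x < y) (hyz : y < z)
    (w : EReal) (hw : w ∈ H.E) (u s : ℝ) (hu : 0 ≤ u) (hus : u < s) :
    ∀ᵐ ω ∂ H.P w,
      (H.X u ω = x ∧ H.X s ω = z ∧ ENNReal.ofReal s < H.ζ ω) →
        ∃ t : ℝ, u < t ∧ t ≤ s ∧ (H.X t ω = y ∨ H.Xm t ω = y) := by
  filter_upwards [H.skipFree w hw] with ω hsf
  rintro ⟨hXu, hXs, hζ⟩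
  set A : Set ℝ := {r | r ∈ Set.Icc u s ∧ H.X r ω ≤ y} with hA
  have huA : u ∈ A := ⟨⟨le_refl u, hus.le⟩, by rw [hXu]; exact hxy.le⟩
  have hAne : A.Nonempty := ⟨u, huA⟩
  have hAbdd : BddAbove A := ⟨s, fun r hr => hr.1.2⟩
  set t₀ := sSup A with ht₀
  have ht₀u : u ≤ t₀ := le_csSup hAbdd huA
  have ht₀s : t₀ ≤ s := csSup_le hAne (fun r hr => hr.1.2)
  have ht₀0 : (0:ℝ) ≤ t₀ := le_trans hu ht₀u
  have hζt₀ : ENNReal.ofReal t₀ < H.ζ ω :=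
    lt_of_le_of_lt (ENNReal.ofReal_le_ofReal ht₀s) hζ
  have hgt : ∀ r, t₀ < r → r ≤ s → y < H.X r ω := by
    intro r h1 h2
    by_contra h
    push_neg at h
    exact absurd (le_csSup hAbdd ⟨⟨le_trans ht₀u h1.le, h2⟩, h⟩) (not_le.mpr h1)
  have hut₀ : u < t₀ := by
    rcases lt_or_eq_of_le ht₀u with h | h
    · exact h
    · exfalso
      have hrc := H.rightCont ω u hu
      have hev : ∀ᶠ r in 𝓝[>] u, y ≤ H.X r ω := by
        filter_upwards [Ioo_mem_nhdsGT_of_mem (Set.left_mem_Ico.mpr hus)] with r hr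
        exact (hgt r (h ▸ hr.1) hr.2.le).le
      have := ge_of_tendsto hrc hev
      rw [hXu] at this
      exact absurd this (not_le.mpr hxy)
  have hXt₀ : y ≤ H.X t₀ ω := by
    rcases lt_or_eq_of_le ht₀s with h | h
    · refine ge_of_tendsto (H.rightCont ω t₀ ht₀0) ?_
      filter_upwards [Ioo_mem_nhdsGT_of_mem (Set.left_mem_Ico.mpr h)] with r hr
      exact (hgt r hr.1 hr.2.le).le
    · rw [h, hXs]; exact hyz.le
  rcases eq_or_lt_of_le hXt₀ with h | h
  · exact ⟨t₀, hut₀, ht₀s, Or.inl h.symm⟩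
  have ht₀A : t₀ ∉ A := fun hmem => absurd hmem.2 (not_le.mpr h)
  have hll := H.leftLimit ω t₀ (lt_of_le_of_lt hu hut₀)
  have hXm : H.Xm t₀ ω ≤ y := by
    have hfreq : ∃ᶠ r in 𝓝[<] t₀, H.X r ω ∈ Set.Iic y := by
      rw [Filter.frequently_iff]
      intro U hU
      rcases mem_nhdsLT_iff_exists_Ioo_subset.mp hU with ⟨b, hb, hsub⟩
      obtain ⟨a, haA, hba⟩ := exists_lt_of_lt_csSup hAne hb
      have hat : a < t₀ :=
        lt_of_le_of_ne (le_csSup hAbdd haA) (fun e => ht₀A (e ▸ haA))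
      exact ⟨a, hsub ⟨hba, hat⟩, haA.2⟩
    exact (isClosed_Iic : IsClosed (Set.Iic y)).mem_of_frequently_of_tendsto hfreq hll
  rcases eq_or_lt_of_le hXm with h2 | h2
  · exact ⟨t₀, hut₀, ht₀s, Or.inr h2⟩
  exfalso
  have hsf' := hsf t₀ ht₀0 hζt₀
  have hmem : y ∈ Set.Ioo (min (H.Xm t₀ ω) (H.X t₀ ω)) (max (H.Xm t₀ ω) (H.X t₀ ω)) ∩ H.E :=
    ⟨⟨lt_of_le_of_lt (min_le_left _ _) h2, lt_of_lt_of_le h (le_max_right _ _)⟩, hy⟩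
  rw [hsf'] at hmem
  exact hmem
end
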